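/- Let X be a Banach space, 1 ≤ p ≤ ∞ with conjugate p', and 0 < q < p'. Let ρ = (ρ_j)_{j≥1} satisfy ρ_min := inf_j ρ_j > 1 and (ρ_j^{-1})_{j≥1} ∈ ℓ_q(ℕ). Set θ := 1 − q/p', κ_j := ρ_j^θ, q_θ := q/θ. Let (t_ν)_{ν∈F} ⊂ X with ‖(ρ^ν‖t_ν‖_X)_ν‖_{ℓ_p(F)} < ∞ and u(y) = Σ_ν t_ν y^ν absolutely convergent for all y ∈ Y. Then M₁ := Σ_ν κ^ν ‖t_ν‖_X < ∞ and for every integer m ≥ 0 there is a set Λ ⊆ F with #Λ = m+1 such that P(y) := Σ_{ν∈Λ} t_ν y^ν satisfies sup_{y∈Y} ‖u(y) − P(y)‖_X ≤ C(κ, q_θ) · M₁ · ‖(κ_j^{-1})_{j≥1}‖_{ℓ_{q_θ}(ℕ)} · (m+1)^{−r}, where r := −1 + 1/p + 1/q, C(κ,q_θ) := β^{1/q_θ} exp((β/q_θ)‖(κ_j^{-1})‖_{ℓ_{q_θ}}^{q_θ}) and β := −ln(1 − κ_min^{−q_θ})κ_min^{q_θ} with κ_min := ρ_min^θ. -/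

import Mathlib

open scoped BigOperators ENNReal

noncomputable section

/-- The set `F` of finitely supported multi-indices. -/
abbrev MIdx : Type := ℕ →₀ ℕ

/-- `ρ^ν := ∏_j ρ_j^{ν_j}` for a finitely supported multi-index `ν`. -/
def mpow (ρ : ℕ → ℝ) (ν : MIdx) : ℝ := ν.prod fun j k => ρ j ^ k

/-- The `ℓ_p(F)` norm (`p ∈ [1,∞]`, valued in `ℝ≥0∞`) of a family of nonnegative reals. -/
def lpF (p : ℝ≥0∞) (a : MIdx → ℝ) : ℝ≥0∞ :=
  if p = ∞ then ⨆ ν, ENNReal.ofReal (a ν)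
  else (∑' ν, ENNReal.ofReal (a ν) ^ p.toReal) ^ (1 / p.toReal)

namespace GTEAux

lemma mpow_eq_prod_range {x : ℕ → ℝ} {ν : MIdx} {N : ℕ} (h : ν.support ⊆ Finset.range N) :
    mpow x ν = ∏ j ∈ Finset.range N, x j ^ ν j :=
  Finsupp.prod_of_support_subset ν h _ (fun j _ => pow_zero (x j))

lemma mpow_nonneg {x : ℕ → ℝ} (hx : ∀ j, 0 ≤ x j) (ν : MIdx) : 0 ≤ mpow x ν :=
  Finset.prod_nonneg fun j _ => pow_nonneg (hx j) _

lemma mpow_pos {x : ℕ → ℝ} (hx : ∀ j, 0 < x j) (ν : MIdx) : 0 < mpow x ν :=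
  Finset.prod_pos fun j _ => pow_pos (hx j) _

lemma mpow_zero (x : ℕ → ℝ) : mpow x 0 = 1 := by
  simp [mpow]

lemma mpow_mul (x z : ℕ → ℝ) (ν : MIdx) :
    mpow (fun j => x j * z j) ν = mpow x ν * mpow z ν := by
  simp only [mpow, Finsupp.prod, mul_pow]
  exact Finset.prod_mul_distrib

lemma mpow_inv (x : ℕ → ℝ) (ν : MIdx) :
    mpow (fun j => (x j)⁻¹) ν = (mpow x ν)⁻¹ := by
  simp only [mpow, Finsupp.prod, inv_pow]
  exact Finset.prod_inv_distrib _

lemma mpow_rpow {x : ℕ → ℝ} (hx : ∀ j, 0 ≤ x j) (s : ℝ) (ν : MIdx) :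
    mpow x ν ^ s = mpow (fun j => x j ^ s) ν := by
  simp only [mpow, Finsupp.prod]
  rw [← Real.finset_prod_rpow _ _ (fun j _ => pow_nonneg (hx j) _) s]
  refine Finset.prod_congr rfl fun j _ => ?_
  rw [← Real.rpow_natCast (x j) (ν j), ← Real.rpow_natCast (x j ^ s) (ν j),
    ← Real.rpow_mul (hx j), ← Real.rpow_mul (hx j), mul_comm]

lemma abs_mpow_le_one {y : ℕ → ℝ} (hy : ∀ j, |y j| ≤ 1) (ν : MIdx) : |mpow y ν| ≤ 1 := by
  simp only [mpow, Finsupp.prod]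
  rw [Finset.abs_prod]
  refine Finset.prod_le_one (fun j _ => abs_nonneg _) (fun j _ => ?_)
  rw [abs_pow]
  exact pow_le_one₀ (abs_nonneg _) (hy j)

lemma inv_one_sub_le_exp {c β x : ℝ} (hc0 : 0 < c) (hc1 : c < 1)
    (hβ : β = -Real.log (1 - c) / c) (hx0 : 0 ≤ x) (hxc : x ≤ c) :
    (1 - x)⁻¹ ≤ Real.exp (β * x) := by
  have h1c : 0 < 1 - c := by linarith
  have h1x : 0 < 1 - x := by linarith
  have key : Real.exp (-(β * x)) ≤ 1 - x := by
    have ht0 : (0:ℝ) ≤ x / c := div_nonneg hx0 hc0.le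
    have ht1 : x / c ≤ 1 := (div_le_one hc0).2 hxc
    have hcx : x / c * c = x := div_mul_cancel₀ x hc0.ne'
    have ht0' : (0:ℝ) ≤ 1 - x / c := by linarith
    have hsum : x / c + (1 - x / c) = 1 := by ring
    have hcv := convexOn_exp.2 (Set.mem_univ (Real.log (1 - c))) (Set.mem_univ 0)
      ht0 ht0' hsum
    rw [smul_eq_mul, smul_eq_mul, smul_eq_mul, smul_eq_mul, Real.exp_log h1c, Real.exp_zero,
      mul_zero, add_zero, mul_one] at hcv
    have harg : x / c * Real.log (1 - c) = -(β * x) := by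
      rw [hβ]; field_simp
    rw [harg] at hcv
    calc Real.exp (-(β * x)) ≤ x / c * (1 - c) + (1 - x / c) := hcv
      _ = 1 - x := by field_simp; ring
  calc (1 - x)⁻¹ ≤ (Real.exp (-(β * x)))⁻¹ := inv_anti₀ (Real.exp_pos _) key
    _ = Real.exp (β * x) := by rw [← Real.exp_neg, neg_neg]

lemma sum_mpow_le {x : ℕ → ℝ} {B : ℝ}
    (h0 : ∀ j, 0 ≤ x j) (h1 : ∀ j, x j < 1)
    (hB : ∀ N : ℕ, ∏ j ∈ Finset.range N, (1 - x j)⁻¹ ≤ B)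
    (A : Finset MIdx) : ∑ ν ∈ A, mpow x ν ≤ B := by
  classical
  set N : ℕ := (A.sup fun ν => ν.support.sup id) + 1 with hN
  have hsupp : ∀ ν ∈ A, ν.support ⊆ Finset.range N := by
    intro ν hν j hj
    simp only [Finset.mem_range, hN]
    have h1' : j ≤ A.sup fun ν => ν.support.sup id :=
      le_trans (Finset.le_sup (f := id) hj) (Finset.le_sup (f := fun ν : MIdx => ν.support.sup id) hν)
    omega
  set K : ℕ := A.sup fun ν => ν.support.sup ν with hK
  have hval : ∀ ν ∈ A, ∀ i : Fin N, ν i < K + 1 := by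
    intro ν hν i
    by_cases hi : (i : ℕ) ∈ ν.support
    · have : ν i ≤ K := le_trans (Finset.le_sup hi) (Finset.le_sup (f := fun ν : MIdx => ν.support.sup ν) hν)
      omega
    · simp [Finsupp.notMem_support_iff.1 hi]
  have hmpow : ∀ ν ∈ A, mpow x ν = ∏ i : Fin N, x i ^ ν i := by
    intro ν hν
    rw [mpow_eq_prod_range (hsupp ν hν), ← Fin.prod_univ_eq_prod_range (fun j => x j ^ ν j) N]
  have hinj : ∀ ν ∈ A, ∀ μ ∈ A, (fun i : Fin N => ν i) = (fun i : Fin N => μ i) → ν = μ := by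
    intro ν hν μ hμ h
    ext j
    by_cases hj : j < N
    · exact congrFun h ⟨j, hj⟩
    · have h1' : j ∉ ν.support := fun hm => hj (Finset.mem_range.1 (hsupp ν hν hm))
      have h2' : j ∉ μ.support := fun hm => hj (Finset.mem_range.1 (hsupp μ hμ hm))
      rw [Finsupp.notMem_support_iff.1 h1', Finsupp.notMem_support_iff.1 h2']
  calc ∑ ν ∈ A, mpow x ν
      = ∑ f ∈ A.image (fun (ν : MIdx) (i : Fin N) => (ν i : ℕ)), ∏ i : Fin N, x i ^ f i := by
        rw [Finset.sum_image hinj]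
        exact Finset.sum_congr rfl hmpow
    _ ≤ ∑ f ∈ Fintype.piFinset (fun _ : Fin N => Finset.range (K + 1)), ∏ i : Fin N, x i ^ f i := by
        refine Finset.sum_le_sum_of_subset_of_nonneg ?_ ?_
        · intro f hf
          obtain ⟨ν, hν, rfl⟩ := Finset.mem_image.1 hf
          rw [Fintype.mem_piFinset]
          intro i
          exact Finset.mem_range.2 (hval ν hν i)
        · intro f _ _
          exact Finset.prod_nonneg fun i _ => pow_nonneg (h0 i) _
    _ = ∏ i : Fin N, ∑ k ∈ Finset.range (K + 1), x i ^ k := (Finset.prod_univ_sum _ _).symm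
    _ ≤ ∏ i : Fin N, (1 - x i)⁻¹ := by
        refine Finset.prod_le_prod (fun i _ => Finset.sum_nonneg fun k _ => pow_nonneg (h0 i) _)
          (fun i _ => ?_)
        calc ∑ k ∈ Finset.range (K + 1), x i ^ k
            ≤ ∑' k : ℕ, x i ^ k := Summable.sum_le_tsum _ (fun k _ => pow_nonneg (h0 i) _)
              (summable_geometric_of_lt_one (h0 i) (h1 i))
          _ = (1 - x i)⁻¹ := tsum_geometric_of_lt_one (h0 i) (h1 i)
    _ = ∏ j ∈ Finset.range N, (1 - x j)⁻¹ := Fin.prod_univ_eq_prod_range (fun j => (1 - x j)⁻¹) N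
    _ ≤ B := hB N

lemma exists_top_finset {ι : Type*} [Infinite ι] {f : ι → ℝ} (hf : Summable f)
    (h0 : ∀ i, 0 ≤ f i) (n : ℕ) :
    ∃ T : Finset ι, T.card = n ∧ ∀ ν ∉ T, ∀ μ ∈ T, f ν ≤ f μ := by
  classical
  induction n with
  | zero => exact ⟨∅, rfl, by simp⟩
  | succ n ih =>
    obtain ⟨T, hcard, htop⟩ := ih
    by_cases hz : ∃ ν, ν ∉ T ∧ 0 < f ν
    · obtain ⟨ν₀, hν₀T, hν₀⟩ := hz
      have hfin : {μ | f ν₀ ≤ f μ}.Finite := by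
        have h1 := hf.tendsto_cofinite_zero.eventually (gt_mem_nhds hν₀)
        simp only [Filter.eventually_cofinite] at h1
        refine h1.subset ?_
        intro μ hμ
        simp only [Set.mem_setOf_eq, not_lt, id] at *
        linarith
      have hν₀s : ν₀ ∈ hfin.toFinset \ T := by
        simp [hν₀T, le_refl]
      obtain ⟨μs, hμs, hmax⟩ := Finset.exists_max_image (hfin.toFinset \ T) f ⟨ν₀, hν₀s⟩
      have hμsT : μs ∉ T := (Finset.mem_sdiff.1 hμs).2
      refine ⟨insert μs T, by rw [Finset.card_insert_of_notMem hμsT, hcard], ?_⟩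
      intro ν hν μ hμ
      have hνT : ν ∉ T := fun h => hν (Finset.mem_insert_of_mem h)
      rcases Finset.mem_insert.1 hμ with rfl | hμT
      · by_cases hcase : f ν₀ ≤ f ν
        · exact hmax ν (by simp [hνT, hcase])
        · exact le_trans (by linarith) (hmax ν₀ hν₀s)
      · exact htop ν hνT μ hμT
    · push_neg at hz
      obtain ⟨ν₀, hν₀⟩ := Infinite.exists_notMem_finset T
      refine ⟨insert ν₀ T, by rw [Finset.card_insert_of_notMem hν₀, hcard], ?_⟩
      intro ν hν μ hμ
      have hνT : ν ∉ T := fun h => hν (Finset.mem_insert_of_mem h)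
      have : f ν ≤ 0 := hz ν hνT
      exact le_trans this (h0 μ)

end GTEAux
open GTEAux

/-- Global Taylor approximation error estimate via the modified sequence
`κ_j = ρ_j^θ`, `θ = 1 - q/p'`, `q_θ = q/θ`: `u ∈ B_{ρ,p}` implies `M₁ = Σ_ν κ^ν ‖t_ν‖ < ∞`
and for each `m ≥ 0` there is a set `Λ` with `m+1` terms such that
`sup_{y∈Y} ‖u(y) − P(y)‖ ≤ C(κ,q_θ) M₁ ‖(κ_j^{-1})‖_{ℓ_{q_θ}(ℕ)} (m+1)^{-r}`.
Here `1/p' = 1 - 1/p.toReal` and the condition `0 < q < p'` is encoded by `0 < q`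
together with `0 < r`. -/
theorem global_taylor_error_kappa
    {X : Type*} [NormedAddCommGroup X] [NormedSpace ℝ X] [CompleteSpace X]
    (p : ℝ≥0∞) (hp : 1 ≤ p)
    (q : ℝ) (hq : 0 < q)
    (r : ℝ) (hrdef : r = -1 + 1 / p.toReal + 1 / q) (hr : 0 < r)
    (ρ : ℕ → ℝ) (ρmin : ℝ) (hρmin : ρmin = ⨅ j, ρ j) (hmin : 1 < ρmin)
    (hρq : Summable fun j => ((ρ j)⁻¹) ^ q)
    (θ : ℝ) (hθ : θ = 1 - q * (1 - 1 / p.toReal))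
    (κ : ℕ → ℝ) (hκ : ∀ j, κ j = ρ j ^ θ)
    (qθ : ℝ) (hqθ : qθ = q / θ)
    (κmin : ℝ) (hκmin : κmin = ρmin ^ θ)
    (β : ℝ) (hβ : β = -Real.log (1 - κmin ^ (-qθ)) * κmin ^ qθ)
    (C : ℝ) (hC : C = β ^ (1 / qθ) * Real.exp (β / qθ * ∑' j, ((κ j)⁻¹) ^ qθ))
    (t : MIdx → X)
    (hM : lpF p (fun ν => mpow ρ ν * ‖t ν‖) ≠ ∞)
    (habs : ∀ y : ℕ → ℝ, (∀ j, |y j| ≤ 1) →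
      Summable fun ν : MIdx => ‖mpow y ν • t ν‖)
    (m : ℕ) :
    Summable (fun ν : MIdx => mpow κ ν * ‖t ν‖) ∧
    ∃ Λ : Finset MIdx, Λ.card = m + 1 ∧
      ∀ y : ℕ → ℝ, (∀ j, |y j| ≤ 1) →
        ‖(∑' ν : MIdx, mpow y ν • t ν) - ∑ ν ∈ Λ, mpow y ν • t ν‖ ≤
          C * (∑' ν : MIdx, mpow κ ν * ‖t ν‖) *
            (∑' j, ((κ j)⁻¹) ^ qθ) ^ (1 / qθ) * ((m : ℝ) + 1) ^ (-r) := by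
  classical
  -- basic facts about ρ
  have hbdd : BddBelow (Set.range ρ) := by
    by_contra hb
    rw [Real.iInf_of_not_bddBelow hb] at hρmin
    linarith
  have hρ : ∀ j, ρmin ≤ ρ j := fun j => hρmin ▸ ciInf_le hbdd j
  have hρ1 : ∀ j, 1 < ρ j := fun j => lt_of_lt_of_le hmin (hρ j)
  have hρ0 : ∀ j, 0 < ρ j := fun j => lt_trans one_pos (hρ1 j)
  have hρm0 : (0:ℝ) < ρmin := lt_trans one_pos hmin
  -- exponent arithmetic
  have hθr : θ = q * r := by
    rw [hθ, hrdef]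
    have h1 : q * (-1 + 1 / p.toReal + 1 / q) = 1 - q * (1 - 1 / p.toReal) := by
      rw [mul_add, mul_one_div, div_self hq.ne']
      ring
    exact h1.symm
  have hθ0 : 0 < θ := hθr ▸ mul_pos hq hr
  have hqθ0 : 0 < qθ := hqθ ▸ div_pos hq hθ0
  have hrq : r = 1 / qθ := by
    rw [hqθ, one_div_div, hθr, mul_comm, mul_div_assoc, div_self hq.ne', mul_one]
  have hθqθ : θ * qθ = q := by
    rw [hqθ, mul_comm]
    exact div_mul_cancel₀ q hθ0.ne'
  -- κ facts
  have hκ0 : ∀ j, 0 < κ j := fun j => (hκ j) ▸ Real.rpow_pos_of_pos (hρ0 j) θ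
  -- the sequence x j = (ρ j)⁻¹ ^ q
  set x : ℕ → ℝ := fun j => ((ρ j)⁻¹) ^ q with hxdef
  have hx0 : ∀ j, 0 ≤ x j := fun j => Real.rpow_nonneg (inv_nonneg.2 (hρ0 j).le) q
  set c : ℝ := ρmin ^ (-q) with hcdef
  have hc0 : 0 < c := Real.rpow_pos_of_pos hρm0 _
  have hc1 : c < 1 := Real.rpow_lt_one_of_one_lt_of_neg hmin (by linarith)
  have hxc : ∀ j, x j ≤ c := by
    intro j
    have h1 : ((ρ j)⁻¹) ^ q ≤ (ρmin⁻¹) ^ q :=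
      Real.rpow_le_rpow (inv_nonneg.2 (hρ0 j).le) (inv_anti₀ hρm0 (hρ j)) hq.le
    have h2 : (ρmin⁻¹) ^ q = c := by
      rw [hcdef, ← Real.rpow_neg_one ρmin, ← Real.rpow_mul hρm0.le]
      congr 1
      ring
    calc x j ≤ (ρmin⁻¹) ^ q := h1
      _ = c := h2
  have hx1 : ∀ j, x j < 1 := fun j => lt_of_le_of_lt (hxc j) hc1
  have hxj : ∀ j, ((κ j)⁻¹) ^ qθ = x j := by
    intro j
    rw [hκ j, ← Real.rpow_neg_one (ρ j ^ θ), ← Real.rpow_mul (hρ0 j).le,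
      ← Real.rpow_mul (hρ0 j).le]
    simp only [hxdef]
    rw [← Real.rpow_neg_one (ρ j), ← Real.rpow_mul (hρ0 j).le]
    congr 1
    linear_combination (-1 : ℝ) * hθqθ
  -- κmin powers
  have hκm : κmin ^ (-qθ) = c := by
    rw [hκmin, ← Real.rpow_mul hρm0.le, hcdef]
    congr 1
    linear_combination (-1 : ℝ) * hθqθ
  have hκm' : κmin ^ qθ = c⁻¹ := by
    rw [hκmin, ← Real.rpow_mul hρm0.le, hcdef, ← Real.rpow_neg_one (ρmin ^ (-q)),
      ← Real.rpow_mul hρm0.le]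
    congr 1
    linear_combination hθqθ
  have hβ' : β = -Real.log (1 - c) / c := by
    rw [hβ, hκm, hκm', div_eq_mul_inv]
  have hβ0 : 0 < β := by
    rw [hβ']
    have hlog : Real.log (1 - c) < 0 := Real.log_neg (by linarith) (by linarith)
    have h1 : 0 < -Real.log (1 - c) := by linarith
    positivity
  -- summability of mpow x and its tsum bound
  have hprod : ∀ N : ℕ, ∏ j ∈ Finset.range N, (1 - x j)⁻¹ ≤ Real.exp (β * ∑' j, x j) := by
    intro N
    calc ∏ j ∈ Finset.range N, (1 - x j)⁻¹
        ≤ ∏ j ∈ Finset.range N, Real.exp (β * x j) :=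
          Finset.prod_le_prod (fun j _ => inv_nonneg.2 (by have := hx1 j; linarith))
            (fun j _ => inv_one_sub_le_exp hc0 hc1 hβ' (hx0 j) (hxc j))
      _ = Real.exp (∑ j ∈ Finset.range N, β * x j) := (Real.exp_sum _ _).symm
      _ ≤ Real.exp (β * ∑' j, x j) := by
          apply Real.exp_le_exp.2
          rw [← Finset.mul_sum]
          exact mul_le_mul_of_nonneg_left (Summable.sum_le_tsum _ (fun j _ => hx0 j) hρq) hβ0.le
  have hsb : Summable (mpow x) :=
    summable_of_sum_le (fun ν => mpow_nonneg hx0 ν) (sum_mpow_le hx0 hx1 hprod)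
  have htsumb : ∑' ν, mpow x ν ≤ Real.exp (β * ∑' j, x j) :=
    Summable.tsum_le_of_sum_le hsb (sum_mpow_le hx0 hx1 hprod)
  set Sx : ℝ := ∑' j, x j with hSxdef
  have hSx0 : 0 ≤ Sx := tsum_nonneg hx0
  have hSS : (∑' j, ((κ j)⁻¹) ^ qθ) = Sx := tsum_congr hxj
  -- Part 1: summability of mpow κ ν * ‖t ν‖
  set z : ℕ → ℝ := fun j => ρ j ^ (θ - 1) with hzdef
  have hz0 : ∀ j, 0 ≤ z j := fun j => Real.rpow_nonneg (hρ0 j).le _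
  have hκz : ∀ ν, mpow κ ν = mpow ρ ν * mpow z ν := by
    intro ν
    rw [← mpow_mul]
    congr 1
    funext j
    simp only [hzdef]
    have h1 := Real.rpow_add (hρ0 j) 1 (θ - 1)
    rw [Real.rpow_one] at h1
    rw [hκ j, ← h1]
    congr 1
    ring
  have hsummable : Summable (fun ν : MIdx => mpow κ ν * ‖t ν‖) := by
    rcases eq_or_ne p ∞ with hp' | hp'
    · -- p = ∞
      have hθq' : θ - 1 = -q := by rw [hθ, hp']; simp
      have hzx : z = x := by
        funext j
        simp only [hzdef, hxdef, hθq']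
        rw [← Real.rpow_neg_one (ρ j), ← Real.rpow_mul (hρ0 j).le]
        congr 1
        ring
      rw [lpF, if_pos hp'] at hM
      set L : ℝ := (⨆ ν, ENNReal.ofReal (mpow ρ ν * ‖t ν‖)).toReal with hLdef
      have hbound : ∀ ν, mpow ρ ν * ‖t ν‖ ≤ L := by
        intro ν
        have h1 : ENNReal.ofReal (mpow ρ ν * ‖t ν‖) ≤ ⨆ ν, ENNReal.ofReal (mpow ρ ν * ‖t ν‖) :=
          le_iSup (fun ν => ENNReal.ofReal (mpow ρ ν * ‖t ν‖)) ν
        have h2 := ENNReal.toReal_mono hM h1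
        rwa [ENNReal.toReal_ofReal (mul_nonneg (mpow_nonneg (fun j => (hρ0 j).le) ν)
          (norm_nonneg _))] at h2
      refine Summable.of_nonneg_of_le
        (fun ν => mul_nonneg (mpow_nonneg (fun j => (hκ0 j).le) ν) (norm_nonneg _))
        (fun ν => ?_) (hsb.mul_right L)
      rw [hκz ν, hzx]
      calc mpow ρ ν * mpow x ν * ‖t ν‖ = mpow x ν * (mpow ρ ν * ‖t ν‖) := by ring
        _ ≤ mpow x ν * L := mul_le_mul_of_nonneg_left (hbound ν) (mpow_nonneg hx0 ν)
    · -- p finite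
      rw [lpF, if_neg hp'] at hM
      have hp0 : p ≠ 0 := by intro h; rw [h] at hp; simp at hp
      have hPpos : 0 < p.toReal := ENNReal.toReal_pos hp0 hp'
      have htop : (∑' ν, ENNReal.ofReal (mpow ρ ν * ‖t ν‖) ^ p.toReal) ≠ ∞ := by
        intro h
        rw [h, ENNReal.top_rpow_of_pos (by positivity)] at hM
        exact hM rfl
      rcases eq_or_ne p 1 with hp1 | hp1
      · -- p = 1
        have hθ1 : θ = 1 := by rw [hθ, hp1]; simp
        have hκρ : mpow κ = mpow ρ := by
          funext ν
          congr 1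
          funext j
          rw [hκ j, hθ1, Real.rpow_one]
        have h1 : ∀ ν : MIdx, ENNReal.ofReal (mpow ρ ν * ‖t ν‖) ^ p.toReal
            = ENNReal.ofReal (mpow ρ ν * ‖t ν‖) := by
          intro ν
          rw [hp1]
          simp
        rw [tsum_congr h1] at htop
        have h2 := ENNReal.summable_toReal htop
        refine Summable.congr h2 fun ν => ?_
        rw [ENNReal.toReal_ofReal (mul_nonneg (mpow_nonneg (fun j => (hρ0 j).le) ν)
          (norm_nonneg _)), hκρ]
      · -- 1 < p < ∞
        have hPlt : 1 < p.toReal := by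
          have h1 : (1:ℝ≥0∞) < p := lt_of_le_of_ne hp (Ne.symm hp1)
          have h2 := (ENNReal.toReal_lt_toReal (by simp) hp').2 h1
          simpa using h2
        set P : ℝ := p.toReal with hPdef
        have hP1' : P - 1 ≠ 0 := by simp only [hPdef]; intro h; nlinarith
        have hconj : P.HolderConjugate (P / (P - 1)) := Real.HolderConjugate.conjExponent hPlt
        set f : MIdx → NNReal := fun ν => (mpow ρ ν * ‖t ν‖).toNNReal with hfdef
        set g : MIdx → NNReal := fun ν => (mpow z ν).toNNReal with hgdef
        have hf : Summable fun ν => f ν ^ P := by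
          rw [← ENNReal.tsum_coe_ne_top_iff_summable]
          have h1 : ∀ ν : MIdx, ((f ν ^ P : NNReal) : ℝ≥0∞)
              = ENNReal.ofReal (mpow ρ ν * ‖t ν‖) ^ P := by
            intro ν
            rw [ENNReal.coe_rpow_of_nonneg _ (by positivity : (0:ℝ) ≤ P)]
            rfl
          rw [tsum_congr h1]
          exact htop
        have hzP : ∀ j, z j ^ (P / (P - 1)) = x j := by
          intro j
          have hexp : (θ - 1) * (P / (P - 1)) = -q := by
            have hθ' : θ - 1 = -q * ((P - 1) / P) := by
              rw [hθ]
              field_simp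
              ring
            rw [hθ']
            field_simp
          simp only [hzdef, hxdef]
          rw [← Real.rpow_mul (hρ0 j).le, hexp, ← Real.rpow_neg_one (ρ j),
            ← Real.rpow_mul (hρ0 j).le]
          congr 1
          ring
        have hg : Summable fun ν => g ν ^ (P / (P - 1)) := by
          rw [← NNReal.summable_coe]
          refine hsb.congr fun ν => ?_
          have h1 : ((g ν ^ (P / (P - 1)) : NNReal) : ℝ) = mpow x ν := by
            rw [NNReal.coe_rpow]
            simp only [hgdef]
            rw [Real.coe_toNNReal _ (mpow_nonneg hz0 ν), mpow_rpow hz0]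
            simp only [hzP]
          exact h1.symm
        have hfg := NNReal.summable_mul_of_Lp_Lq hconj hf hg
        rw [← NNReal.summable_coe] at hfg
        refine hfg.congr fun ν => ?_
        push_cast
        simp only [hfdef, hgdef]
        rw [Real.coe_toNNReal _ (mul_nonneg (mpow_nonneg (fun j => (hρ0 j).le) ν)
          (norm_nonneg _)), Real.coe_toNNReal _ (mpow_nonneg hz0 ν), hκz ν]
        ring
  -- Part 2: selection of Λ
  obtain ⟨T, hcard, htop'⟩ := exists_top_finset hsb (mpow_nonneg hx0) (m + 1)
  have hite0 : ∀ ν : MIdx, 0 ≤ (if ν = 0 then 0 else mpow x ν) := by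
    intro ν
    split
    · exact le_refl 0
    · exact mpow_nonneg hx0 ν
  have hitele : ∀ ν : MIdx, (if ν = 0 then 0 else mpow x ν) ≤ mpow x ν := by
    intro ν
    split
    · exact mpow_nonneg hx0 ν
    · exact le_refl _
  have hsb' : Summable (fun ν : MIdx => if ν = 0 then 0 else mpow x ν) :=
    Summable.of_nonneg_of_le hite0 hitele hsb
  set S' : ℝ := ∑' ν : MIdx, (if ν = 0 then 0 else mpow x ν) with hS'def
  have hS'sum : ∑' ν, mpow x ν = 1 + S' := by
    rw [Summable.tsum_eq_add_tsum_ite hsb 0, mpow_zero]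
  have hexp1 : S' ≤ β * Sx * Real.exp (β * Sx) := by
    have h1 : 1 - β * Sx ≤ Real.exp (-(β * Sx)) := by
      have := Real.add_one_le_exp (-(β * Sx)); linarith
    have h2 : (1 - β * Sx) * Real.exp (β * Sx) ≤ 1 := by
      calc (1 - β * Sx) * Real.exp (β * Sx) ≤ Real.exp (-(β * Sx)) * Real.exp (β * Sx) :=
            mul_le_mul_of_nonneg_right h1 (Real.exp_pos _).le
        _ = 1 := by rw [← Real.exp_add]; simp
    have h3 : S' = (∑' ν, mpow x ν) - 1 := by linarith [hS'sum]
    nlinarith [Real.exp_pos (β * Sx), htsumb]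
  have hkey : ∀ ν ∉ T, ((m:ℝ) + 1) * mpow x ν ≤ S' := by
    intro ν hν
    by_cases hν0 : ν = 0
    · subst hν0
      have hone : ∀ μ ∈ T, (1:ℝ) ≤ (if μ = 0 then 0 else mpow x μ) := by
        intro μ hμ
        have hμ0 : μ ≠ 0 := fun h => hν (h ▸ hμ)
        rw [if_neg hμ0]
        have := htop' 0 hν μ hμ
        rwa [mpow_zero] at this
      calc ((m:ℝ) + 1) * mpow x 0 = ∑ _μ ∈ T, (1:ℝ) := by
            rw [mpow_zero, mul_one, Finset.sum_const, hcard, nsmul_eq_mul, mul_one]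
            push_cast
            ring
        _ ≤ ∑ μ ∈ T, (if μ = 0 then 0 else mpow x μ) := Finset.sum_le_sum hone
        _ ≤ S' := Summable.sum_le_tsum T (fun μ _ => hite0 μ) hsb'
    · set U : Finset MIdx := insert ν (T.erase 0) with hUdef
      have hνU : ν ∉ T.erase 0 := fun h => hν (Finset.mem_of_mem_erase h)
      have hUcard : m + 1 ≤ U.card := by
        rw [hUdef, Finset.card_insert_of_notMem hνU]
        by_cases h0 : (0 : MIdx) ∈ T
        · rw [Finset.card_erase_of_mem h0, hcard]
          omega
        · rw [Finset.erase_eq_of_notMem h0, hcard]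
          omega
      have hUb : ∀ μ ∈ U, mpow x ν ≤ (if μ = 0 then 0 else mpow x μ) := by
        intro μ hμ
        rcases Finset.mem_insert.1 hμ with rfl | hμ'
        · rw [if_neg hν0]
        · rw [if_neg (Finset.ne_of_mem_erase hμ')]
          exact htop' ν hν μ (Finset.mem_of_mem_erase hμ')
      calc ((m:ℝ) + 1) * mpow x ν ≤ (U.card : ℝ) * mpow x ν := by
            apply mul_le_mul_of_nonneg_right _ (mpow_nonneg hx0 ν)
            exact_mod_cast hUcard
        _ = ∑ _μ ∈ U, mpow x ν := by rw [Finset.sum_const, nsmul_eq_mul]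
        _ ≤ ∑ μ ∈ U, (if μ = 0 then 0 else mpow x μ) := Finset.sum_le_sum hUb
        _ ≤ S' := Summable.sum_le_tsum U (fun μ _ => hite0 μ) hsb'
  -- inverse powers of mpow κ
  have hbx : ∀ ν : MIdx, mpow x ν = ((mpow κ ν)⁻¹) ^ qθ := by
    intro ν
    rw [← mpow_inv, mpow_rpow (fun j => inv_nonneg.2 (hκ0 j).le) qθ]
    simp only [hxj]
  have hinvκ : ∀ ν : MIdx, (mpow κ ν)⁻¹ = mpow x ν ^ r := by
    intro ν
    rw [hbx ν, ← Real.rpow_mul (inv_nonneg.2 (mpow_pos hκ0 ν).le),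
      show qθ * r = 1 by rw [hrq]; field_simp, Real.rpow_one]
  have hC2 : C = β ^ r * Real.exp (β * Sx * r) := by
    rw [hC, hSS, ← hrq, show β / qθ * Sx = β * Sx * r by rw [hrq]; ring]
  set D : ℝ := C * Sx ^ r * ((m:ℝ) + 1) ^ (-r) with hDdef
  have hD : ∀ ν ∉ T, (mpow κ ν)⁻¹ ≤ D := by
    intro ν hν
    have hm1 : (0:ℝ) < (m:ℝ) + 1 := by positivity
    have h1 : mpow x ν ≤ (β * Sx * Real.exp (β * Sx)) / ((m:ℝ) + 1) := by
      rw [le_div_iff₀ hm1, mul_comm]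
      exact le_trans (hkey ν hν) hexp1
    rw [hinvκ ν]
    calc mpow x ν ^ r ≤ ((β * Sx * Real.exp (β * Sx)) / ((m:ℝ) + 1)) ^ r :=
          Real.rpow_le_rpow (mpow_nonneg hx0 ν) h1 hr.le
      _ = D := by
          rw [Real.div_rpow (by positivity) hm1.le,
            Real.mul_rpow (mul_nonneg hβ0.le hSx0) (Real.exp_pos _).le,
            Real.mul_rpow hβ0.le hSx0, ← Real.exp_mul,
            hDdef, hC2, Real.rpow_neg hm1.le]
          ring
  have hD0 : 0 ≤ D := by
    rw [hDdef, hC2]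
    positivity
  -- final bound
  refine ⟨hsummable, T, hcard, ?_⟩
  intro y hy
  have hgn := habs y hy
  have hgsum : Summable (fun ν : MIdx => mpow y ν • t ν) := hgn.of_norm
  have hsplit := Summable.sum_add_tsum_compl (s := T) hgsum
  have heq : (∑' ν : MIdx, mpow y ν • t ν) - ∑ ν ∈ T, mpow y ν • t ν
      = ∑' ν : ((T : Set MIdx)ᶜ : Set MIdx), mpow y (ν : MIdx) • t (ν : MIdx) := by
    rw [← hsplit]
    abel
  rw [heq]
  have hκt0 : ∀ ν : MIdx, 0 ≤ mpow κ ν * ‖t ν‖ :=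
    fun ν => mul_nonneg (mpow_nonneg (fun j => (hκ0 j).le) ν) (norm_nonneg _)
  have hpt : ∀ ν : ((T : Set MIdx)ᶜ : Set MIdx),
      ‖mpow y (ν : MIdx) • t (ν : MIdx)‖ ≤ D * (mpow κ (ν : MIdx) * ‖t (ν : MIdx)‖) := by
    rintro ⟨ν, hν⟩
    have hνT : ν ∉ T := hν
    have h1 : ‖mpow y ν • t ν‖ ≤ ‖t ν‖ := by
      rw [norm_smul, Real.norm_eq_abs]
      calc |mpow y ν| * ‖t ν‖ ≤ 1 * ‖t ν‖ :=
            mul_le_mul_of_nonneg_right (abs_mpow_le_one hy ν) (norm_nonneg _)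
        _ = ‖t ν‖ := one_mul _
    have h2 : ‖t ν‖ = (mpow κ ν)⁻¹ * (mpow κ ν * ‖t ν‖) :=
      (inv_mul_cancel_left₀ (mpow_pos hκ0 ν).ne' _).symm
    calc ‖mpow y ν • t ν‖ ≤ ‖t ν‖ := h1
      _ = (mpow κ ν)⁻¹ * (mpow κ ν * ‖t ν‖) := h2
      _ ≤ D * (mpow κ ν * ‖t ν‖) :=
          mul_le_mul_of_nonneg_right (hD ν hνT) (hκt0 ν)
  calc ‖∑' ν : ((T : Set MIdx)ᶜ : Set MIdx), mpow y (ν : MIdx) • t (ν : MIdx)‖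
      ≤ ∑' ν : ((T : Set MIdx)ᶜ : Set MIdx), ‖mpow y (ν : MIdx) • t (ν : MIdx)‖ :=
        norm_tsum_le_tsum_norm (hgn.subtype _)
    _ ≤ ∑' ν : ((T : Set MIdx)ᶜ : Set MIdx), D * (mpow κ (ν : MIdx) * ‖t (ν : MIdx)‖) :=
        Summable.tsum_le_tsum hpt (hgn.subtype _) ((hsummable.mul_left D).subtype _)
    _ = D * ∑' ν : ((T : Set MIdx)ᶜ : Set MIdx), mpow κ (ν : MIdx) * ‖t (ν : MIdx)‖ :=
        tsum_mul_left
    _ ≤ D * ∑' ν : MIdx, mpow κ ν * ‖t ν‖ := by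
        apply mul_le_mul_of_nonneg_left _ hD0
        exact Summable.tsum_subtype_le (fun ν : MIdx => mpow κ ν * ‖t ν‖) _ hκt0 hsummable
    _ = C * (∑' ν : MIdx, mpow κ ν * ‖t ν‖) *
          (∑' j, ((κ j)⁻¹) ^ qθ) ^ (1 / qθ) * ((m : ℝ) + 1) ^ (-r) := by
        rw [hSS, ← hrq, hDdef]
        ring
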